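/- arXiv:2310.17112 — 3 statements merged into one kernel-verified Lean document; each statement's English description precedes it below -/
import Mathlib

section
/- The state (i, x₁) = (0, 0) is an unstable equilibrium of the epidemic-behavior co-evolution system: the determinant of the Jacobian at (0,0) equals −γ·k₀·(u(c₁) − u(c₂)) < 0. -/
/-- Prelec weighting function extended by ω(0) = 0. -/
noncomputable def prelec0 (α p : ℝ) : ℝ :=
  if p = 0 then 0 else Real.exp (-((-Real.log p) ^ α))

/-- di/dt of the epidemic-behavior co-evolution system (with β₂ = 0). -/
noncomputable def F1 (γ kβ₁ i x : ℝ) : ℝ := i * (1 - i) * kβ₁ * x - γ * i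

/-- dx₁/dt of the epidemic-behavior co-evolution system. -/
noncomputable def F2 (α k₀ kβ₁ ucn uc1 uc2 i x : ℝ) : ℝ :=
  x * (1 - x) * (-(kβ₁ * i) + k₀ * (ucn * prelec0 α (kβ₁ * i) + uc1 - uc2))

/-- The state (0,0) is an unstable equilibrium: the Jacobian determinant at
(0,0) equals −γ·k₀·(u(c₁)−u(c₂)) < 0. -/
theorem stmt10 (α γ k₀ kβ₁ ucn uc1 uc2 : ℝ)
    (hα : 0 < α) (hα1 : α ≤ 1) (hγ : 0 < γ) (hk₀ : 0 < k₀) (hkβ : 0 < kβ₁)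
    (hucn : ucn < 0) (hΔ : 0 < uc1 - uc2) :
    deriv (fun i => F1 γ kβ₁ i 0) 0 * deriv (fun x => F2 α k₀ kβ₁ ucn uc1 uc2 0 x) 0
      - deriv (fun x => F1 γ kβ₁ 0 x) 0 * deriv (fun i => F2 α k₀ kβ₁ ucn uc1 uc2 i 0) 0
      = -γ * k₀ * (uc1 - uc2) ∧
    -γ * k₀ * (uc1 - uc2) < 0 := by
  have e1 : (fun i => F1 γ kβ₁ i 0) = fun i : ℝ => (-γ) * i := by
    funext i; simp only [F1]; ring
  have e2 : (fun x => F2 α k₀ kβ₁ ucn uc1 uc2 0 x)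
      = fun x : ℝ => (k₀ * (uc1 - uc2)) * x - (k₀ * (uc1 - uc2)) * x ^ 2 := by
    funext x; simp only [F2, prelec0, mul_zero, if_true, eq_self_iff_true]; ring
  have e3 : (fun x => F1 γ kβ₁ 0 x) = fun _ : ℝ => (0 : ℝ) := by
    funext x; simp [F1]
  have H1 : HasDerivAt (fun i => F1 γ kβ₁ i 0) (-γ) 0 := by
    rw [e1]
    simpa using (hasDerivAt_id (0:ℝ)).const_mul (-γ)
  have H2 : HasDerivAt (fun x => F2 α k₀ kβ₁ ucn uc1 uc2 0 x) (k₀ * (uc1 - uc2)) 0 := by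
    rw [e2]
    have := ((hasDerivAt_id (0:ℝ)).const_mul (k₀ * (uc1 - uc2))).sub
      ((hasDerivAt_pow 2 (0:ℝ)).const_mul (k₀ * (uc1 - uc2)))
    simpa [Pi.sub_def] using this
  have d3 : deriv (fun x => F1 γ kβ₁ 0 x) 0 = 0 := by rw [e3]; simp
  refine ⟨?_, ?_⟩
  · rw [H1.deriv, H2.deriv, d3]; ring
  · nlinarith [mul_pos (mul_pos hγ hk₀) hΔ]
end

section
/- If k̄ < γ/β₁, then (i, x₁) = (0, 1) is a stable equilibrium of the epidemic-behavior co-evolution system: the Jacobian at (0,1) has trace P = −(γ − k̄β₁) − k₀(u(c₁) − u(c₂)) < 0 and determinant Q = k₀(γ − k̄β₁)(u(c₁) − u(c₂)) > 0. -/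
lemma d1 (γ kβ₁ : ℝ) : deriv (fun i => F1 γ kβ₁ i 1) 0 = kβ₁ - γ := by
  have h1 : HasDerivAt (fun i : ℝ => i) 1 0 := hasDerivAt_id 0
  have h2 : HasDerivAt (fun i : ℝ => 1 - i) (0 - 1) 0 := (hasDerivAt_const 0 (1:ℝ)).sub h1
  have h : HasDerivAt (fun i : ℝ => F1 γ kβ₁ i 1)
      ((1 * (1 - 0) + 0 * (0 - 1)) * kβ₁ * 1 - γ * 1) 0 := by
    have := (((h1.mul h2).mul_const kβ₁).mul_const 1).sub (h1.const_mul γ)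
    simpa [F1, Pi.sub_def] using this
  rw [h.deriv]; ring

lemma d2 (α k₀ kβ₁ ucn uc1 uc2 : ℝ) :
    deriv (fun x => F2 α k₀ kβ₁ ucn uc1 uc2 0 x) 1 = -(k₀ * (uc1 - uc2)) := by
  have hfe : (fun x : ℝ => F2 α k₀ kβ₁ ucn uc1 uc2 0 x)
      = fun x => x * (1 - x) * (k₀ * (uc1 - uc2)) := by
    funext x
    simp [F2, prelec0]
  have h1 : HasDerivAt (fun x : ℝ => x) 1 1 := hasDerivAt_id 1
  have h2 : HasDerivAt (fun x : ℝ => 1 - x) (0 - 1) 1 := (hasDerivAt_const 1 (1:ℝ)).sub h1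
  have h : HasDerivAt (fun x : ℝ => x * (1 - x) * (k₀ * (uc1 - uc2)))
      ((1 * (1 - 1) + 1 * (0 - 1)) * (k₀ * (uc1 - uc2))) 1 := (h1.mul h2).mul_const _
  rw [hfe, h.deriv]; ring

lemma d3 (γ kβ₁ : ℝ) : deriv (fun x => F1 γ kβ₁ 0 x) 1 = 0 := by
  have : (fun x : ℝ => F1 γ kβ₁ 0 x) = fun _ => 0 := by
    funext x; simp [F1]
  rw [this, deriv_const]

lemma d4 (α k₀ kβ₁ ucn uc1 uc2 : ℝ) :
    deriv (fun i => F2 α k₀ kβ₁ ucn uc1 uc2 i 1) 0 = 0 := by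
  have : (fun i : ℝ => F2 α k₀ kβ₁ ucn uc1 uc2 i 1) = fun _ => 0 := by
    funext i; simp [F2]
  rw [this, deriv_const]

/-- If k̄ < γ/β₁ (i.e. k̄β₁ < γ), then (0,1) is a stable equilibrium: the
Jacobian at (0,1) has trace −(γ − k̄β₁) − k₀(u(c₁)−u(c₂)) < 0 and determinant
k₀(γ − k̄β₁)(u(c₁)−u(c₂)) > 0. -/
theorem stmt11 (α γ k₀ kβ₁ ucn uc1 uc2 : ℝ)
    (hα : 0 < α) (hα1 : α ≤ 1) (hγ : 0 < γ) (hk₀ : 0 < k₀) (hkβ : 0 < kβ₁)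
    (hucn : ucn < 0) (hΔ : 0 < uc1 - uc2) (hthr : kβ₁ < γ) :
    (deriv (fun i => F1 γ kβ₁ i 1) 0 + deriv (fun x => F2 α k₀ kβ₁ ucn uc1 uc2 0 x) 1
        = -(γ - kβ₁) - k₀ * (uc1 - uc2) ∧
      -(γ - kβ₁) - k₀ * (uc1 - uc2) < 0) ∧
    (deriv (fun i => F1 γ kβ₁ i 1) 0 * deriv (fun x => F2 α k₀ kβ₁ ucn uc1 uc2 0 x) 1
        - deriv (fun x => F1 γ kβ₁ 0 x) 1 * deriv (fun i => F2 α k₀ kβ₁ ucn uc1 uc2 i 1) 0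
        = k₀ * (γ - kβ₁) * (uc1 - uc2) ∧
      0 < k₀ * (γ - kβ₁) * (uc1 - uc2)) := by
  rw [d1, d2, d3, d4]
  refine ⟨⟨by ring, ?_⟩, ⟨by ring, ?_⟩⟩
  · nlinarith
  · exact mul_pos (mul_pos hk₀ (by linarith)) hΔ
end

section
/- If k̄ > γ/β₁ and Φ := −k₀(u(c₁)−u(c₂)) − (γ − k̄β₁) − k₀·u(cₙ)·ω(k̄β₁ − γ) < 0, then (i, x₁) = (1 − γ/(k̄β₁), 1) is a stable equilibrium: the Jacobian there has trace h₁ = Φ − (k̄β₁ − γ) < 0 and determinant (γ − k̄β₁)·Φ > 0. -/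
/-- If k̄β₁ > γ and Φ < 0, then (1 − γ/(k̄β₁), 1) is a stable equilibrium:
the Jacobian there has trace Φ − (k̄β₁ − γ) < 0 and determinant (γ − k̄β₁)·Φ > 0,
where Φ = −k₀(u(c₁)−u(c₂)) − (γ − k̄β₁) − k₀·u(cₙ)·ω(k̄β₁ − γ). -/
theorem stmt12 (α γ k₀ kβ₁ ucn uc1 uc2 : ℝ)
    (hα : 0 < α) (hα1 : α ≤ 1) (hγ : 0 < γ) (hk₀ : 0 < k₀) (hkβ : γ < kβ₁)
    (hucn : ucn < 0) (hΔ : 0 < uc1 - uc2)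
    (Φ : ℝ)
    (hΦdef : Φ = -k₀ * (uc1 - uc2) - (γ - kβ₁) - k₀ * ucn * prelec0 α (kβ₁ - γ))
    (hΦ : Φ < 0) :
    (deriv (fun i => F1 γ kβ₁ i 1) (1 - γ / kβ₁)
        + deriv (fun x => F2 α k₀ kβ₁ ucn uc1 uc2 (1 - γ / kβ₁) x) 1
        = Φ - (kβ₁ - γ) ∧
      Φ - (kβ₁ - γ) < 0) ∧
    (deriv (fun i => F1 γ kβ₁ i 1) (1 - γ / kβ₁)
          * deriv (fun x => F2 α k₀ kβ₁ ucn uc1 uc2 (1 - γ / kβ₁) x) 1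
        - deriv (fun x => F1 γ kβ₁ (1 - γ / kβ₁) x) 1
          * deriv (fun i => F2 α k₀ kβ₁ ucn uc1 uc2 i 1) (1 - γ / kβ₁)
        = (γ - kβ₁) * Φ ∧
      0 < (γ - kβ₁) * Φ) := by
  have hkne : kβ₁ ≠ 0 := by linarith
  set i0 : ℝ := 1 - γ / kβ₁ with hi0
  -- argument of prelec at equilibrium
  have harg : kβ₁ * i0 = kβ₁ - γ := by rw [hi0]; field_simp
  -- d F1 / d i at i0
  have h11 : deriv (fun i => F1 γ kβ₁ i 1) i0 = γ - kβ₁ := by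
    have h : HasDerivAt (fun i : ℝ => F1 γ kβ₁ i 1)
        (((1 * (1 - i0) + i0 * (0 - 1)) * kβ₁) * 1 - γ * 1) i0 := by
      simpa [F1, Pi.sub_def] using
        ((((hasDerivAt_id i0).mul ((hasDerivAt_const i0 (1:ℝ)).sub (hasDerivAt_id i0))).mul_const kβ₁).mul_const (1:ℝ)).sub ((hasDerivAt_id i0).const_mul γ)
    rw [h.deriv]
    linear_combination (-2) * harg
  -- d F2 / d x at 1
  set C : ℝ := -(kβ₁ * i0) + k₀ * (ucn * prelec0 α (kβ₁ * i0) + uc1 - uc2) with hC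
  have h22 : deriv (fun x => F2 α k₀ kβ₁ ucn uc1 uc2 i0 x) 1 = Φ := by
    have h : HasDerivAt (fun x : ℝ => F2 α k₀ kβ₁ ucn uc1 uc2 i0 x)
        ((1 * (1 - 1) + 1 * (0 - 1)) * C) 1 := by
      simpa [F2, hC] using
        (((hasDerivAt_id (1:ℝ)).mul ((hasDerivAt_const (1:ℝ) (1:ℝ)).sub (hasDerivAt_id 1))).mul_const C)
    rw [h.deriv, hC, harg, hΦdef]
    ring
  -- d F1 / d x at 1
  have h12 : deriv (fun x => F1 γ kβ₁ i0 x) 1 = i0 * (1 - i0) * kβ₁ := by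
    have h : HasDerivAt (fun x : ℝ => F1 γ kβ₁ i0 x)
        (i0 * (1 - i0) * kβ₁ * 1 - γ * 0) 1 := by
      simpa [F1, Pi.sub_def] using
        (((hasDerivAt_id (1:ℝ)).const_mul (i0 * (1 - i0) * kβ₁)).sub (hasDerivAt_const (1:ℝ) (γ * i0)))
    rw [h.deriv]; ring
  -- d F2 / d i at i0 (function is identically 0)
  have h21 : deriv (fun i => F2 α k₀ kβ₁ ucn uc1 uc2 i 1) i0 = 0 := by
    have : (fun i => F2 α k₀ kβ₁ ucn uc1 uc2 i 1) = fun _ => (0:ℝ) := by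
      funext i; simp [F2]
    rw [this, deriv_const]
  have htr : Φ - (kβ₁ - γ) < 0 := by linarith
  have hdet : 0 < (γ - kβ₁) * Φ := mul_pos_of_neg_of_neg (by linarith) hΦ
  refine ⟨⟨?_, htr⟩, ⟨?_, hdet⟩⟩
  · rw [h11, h22]; ring
  · rw [h11, h22, h12, h21]; ring
end
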